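/- arXiv:1306.6739 — 3 statements merged into one kernel-verified Lean document; each statement's English description precedes it below -/
import Mathlib

section
/- Let Δ ∈ ℝ^{n×n} be nonnegative with ρ(Δ) < 1 and with diagonal entries Δ_ii < 1. Then for each i, the diagonal entry d_i := ((I−Δ)^{-1})_{ii} satisfies d_i ≥ (1+Δ_ii) / (1 − (Δ²)_{ii}). -/
open Matrix Filter

attribute [local instance] Matrix.linftyOpNormedRing Matrix.linftyOpNormedAlgebra

lemma pow_entry_nonneg {n : ℕ} {Δ : Matrix (Fin n) (Fin n) ℝ}
    (hnn : ∀ i j, 0 ≤ Δ i j) (k : ℕ) (i j : Fin n) : 0 ≤ (Δ ^ k) i j := by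
  induction k generalizing i j with
  | zero => simp [Matrix.one_apply]; positivity
  | succ m ih =>
    rw [pow_succ, Matrix.mul_apply]
    exact Finset.sum_nonneg fun l _ => mul_nonneg (ih i l) (hnn l j)

lemma diag_mul_le {n : ℕ} {A B : Matrix (Fin n) (Fin n) ℝ}
    (hA : ∀ i j, 0 ≤ A i j) (hB : ∀ i j, 0 ≤ B i j) (i : Fin n) :
    A i i * B i i ≤ (A * B) i i := by
  rw [Matrix.mul_apply]
  exact Finset.single_le_sum (f := fun l => A i l * B l i)
    (fun l _ => mul_nonneg (hA i l) (hB l i)) (Finset.mem_univ i)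

lemma entry_nnnorm_le_linfty {n : ℕ} (A : Matrix (Fin n) (Fin n) ℂ) (p q : Fin n) :
    ‖A p q‖₊ ≤ ‖A‖₊ := by
  rw [Matrix.linfty_opNNNorm_def]
  calc ‖A p q‖₊ ≤ ∑ j, ‖A p j‖₊ :=
        Finset.single_le_sum (f := fun j => ‖A p j‖₊) (fun j _ => zero_le)
          (Finset.mem_univ q)
    _ ≤ _ := Finset.le_sup (f := fun r => ∑ j, ‖A r j‖₊) (Finset.mem_univ p)

set_option maxHeartbeats 1000000

/-- For `Δ ≥ 0` with `ρ(Δ) < 1` and `Δ i i < 1`, the diagonal entries of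
`(I-Δ)⁻¹` satisfy `d_i ≥ (1+Δ_ii)/(1-(Δ²)_ii)`. -/
theorem diag_inverse_lower_bound
    (n : ℕ) (Δ : Matrix (Fin n) (Fin n) ℝ)
    (hnn : ∀ i j, 0 ≤ Δ i j)
    (hρ : ∀ μ ∈ spectrum ℂ (Δ.map Complex.ofReal), ‖μ‖ < 1)
    (hdiag : ∀ i, Δ i i < 1) :
    ∀ i, (1 + Δ i i) / (1 - (Δ * Δ) i i) ≤ (1 - Δ)⁻¹ i i := by
  intro i
  haveI : Nonempty (Fin n) := ⟨i⟩
  set M : Matrix (Fin n) (Fin n) ℂ := Δ.map Complex.ofReal with hM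
  -- spectral radius < 1
  have hρ' : spectralRadius ℂ M < 1 := by
    have := spectrum.spectralRadius_lt_of_forall_lt_of_nonempty (𝕜 := ℂ)
      (spectrum.nonempty M) (r := 1) (fun k hk => by
        have := hρ k hk
        simpa [← NNReal.coe_lt_coe] using this)
    simpa using this
  obtain ⟨c, hc1, hc2⟩ := exists_between hρ'
  lift c to NNReal using (hc2.trans_le le_top).ne
  have hcR : (c : ℝ) < 1 := by exact_mod_cast hc2
  have hc0 : (0:ℝ) ≤ (c : ℝ) := c.coe_nonneg
  have hgel := spectrum.pow_nnnorm_pow_one_div_tendsto_nhds_spectralRadius M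
  have hev : ∀ᶠ k : ℕ in atTop, (‖M ^ k‖₊ : ENNReal) ^ (1 / (k : ℝ)) < (c : ENNReal) :=
    hgel.eventually_lt_const hc1
  obtain ⟨N, hN⟩ := eventually_atTop.mp (hev.and (eventually_ge_atTop 1))
  -- map of powers
  have hmap : ∀ k : ℕ, M ^ k = (Δ ^ k).map Complex.ofReal := by
    intro k
    have : M = Complex.ofRealHom.mapMatrix Δ := rfl
    rw [this, ← map_pow]
    rfl
  -- entrywise geometric bound
  have hbd : ∀ k ≥ N, ∀ p q : Fin n, (Δ ^ k) p q ≤ (c : ℝ) ^ k := by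
    intro k hk p q
    obtain ⟨h1, h2⟩ := hN k hk
    have hk0 : (k : ℝ) ≠ 0 := by positivity
    have hx : (‖M ^ k‖₊ : ENNReal) ≤ (c : ENNReal) ^ k := by
      calc (‖M ^ k‖₊ : ENNReal) = ((‖M ^ k‖₊ : ENNReal) ^ (1 / (k:ℝ))) ^ (k:ℝ) := by
            rw [← ENNReal.rpow_mul, one_div, inv_mul_cancel₀ hk0, ENNReal.rpow_one]
        _ ≤ (c : ENNReal) ^ (k:ℝ) := ENNReal.rpow_le_rpow h1.le (Nat.cast_nonneg k)
        _ = (c : ENNReal) ^ k := ENNReal.rpow_natCast _ _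
    have hx' : ‖M ^ k‖₊ ≤ c ^ k := by exact_mod_cast hx
    have hx'' : ‖M ^ k‖ ≤ (c : ℝ) ^ k := by exact_mod_cast hx'
    have he : ‖(M ^ k) p q‖ = |(Δ ^ k) p q| := by
      rw [hmap k]; simp [Matrix.map_apply]
    calc (Δ ^ k) p q ≤ |(Δ ^ k) p q| := le_abs_self _
      _ = ‖(M ^ k) p q‖ := he.symm
      _ ≤ ‖M ^ k‖ := by exact_mod_cast entry_nnnorm_le_linfty (M ^ k) p q
      _ ≤ (c : ℝ) ^ k := hx''
  -- summability of entries
  have hsum : ∀ p q : Fin n, Summable fun k => (Δ ^ k) p q := by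
    intro p q
    rw [← summable_nat_add_iff N]
    refine Summable.of_nonneg_of_le (fun k => pow_entry_nonneg hnn _ p q)
      (fun k => hbd (k + N) (Nat.le_add_left N k) p q) ?_
    simpa [pow_add] using (summable_geometric_of_lt_one hc0 hcR).mul_right ((c:ℝ) ^ N)
  -- the Neumann series matrix
  set S : Matrix (Fin n) (Fin n) ℝ := Matrix.of (fun p q => ∑' k, (Δ ^ k) p q) with hS
  have hSapp : ∀ p q, S p q = ∑' k, (Δ ^ k) p q := fun p q => rfl
  have hSnn : ∀ p q, 0 ≤ S p q := fun p q =>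
    tsum_nonneg fun k => pow_entry_nonneg hnn k p q
  -- (1 - Δ) * S = 1
  have hinv : (1 - Δ) * S = 1 := by
    ext p q
    have hswap : ∑ l, Δ p l * S l q = ∑' k, (Δ ^ (k + 1)) p q := by
      have h1 : ∀ l : Fin n, Δ p l * S l q = ∑' k, Δ p l * (Δ ^ k) l q := by
        intro l; rw [hSapp, tsum_mul_left]
      rw [Finset.sum_congr rfl (fun l _ => h1 l),
        ← Summable.tsum_finsetSum (fun l _ => (hsum l q).mul_left (Δ p l))]
      congr 1; ext k
      rw [pow_succ', Matrix.mul_apply]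
    have hshift : S p q = (Δ ^ 0) p q + ∑' k, (Δ ^ (k + 1)) p q := by
      rw [hSapp]
      exact Summable.tsum_eq_zero_add (hsum p q)
    rw [Matrix.sub_mul, Matrix.one_mul, Matrix.sub_apply, Matrix.mul_apply, hswap,
      hshift]
    simp [Matrix.one_apply]
  have hinveq : (1 - Δ)⁻¹ = S := Matrix.inv_eq_right_inv hinv
  rw [hinveq]
  -- lower bounds for diagonal entries of powers
  set b : ℝ := (Δ * Δ) i i with hbdef
  have hb0 : 0 ≤ b := by
    rw [hbdef, Matrix.mul_apply]
    exact Finset.sum_nonneg fun l _ => mul_nonneg (hnn i l) (hnn l i)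
  have hpow2 : ∀ m : ℕ, Δ ^ (2 * m) = (Δ * Δ) ^ m := by
    intro m; rw [pow_mul, sq]
  have heven : ∀ m : ℕ, b ^ m ≤ (Δ ^ (2 * m)) i i := by
    intro m
    induction m with
    | zero => simp [Matrix.one_apply]
    | succ m ih =>
      have hDD : ∀ p q, 0 ≤ (Δ * Δ) p q := fun p q => by
        rw [Matrix.mul_apply]
        exact Finset.sum_nonneg fun l _ => mul_nonneg (hnn p l) (hnn l q)
      have h1 : (Δ ^ (2 * m)) i i * (Δ * Δ) i i ≤ (Δ ^ (2 * (m + 1))) i i := by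
        have : Δ ^ (2 * (m + 1)) = Δ ^ (2 * m) * (Δ * Δ) := by
          rw [hpow2, hpow2, pow_succ]
        rw [this]
        exact diag_mul_le (fun p q => pow_entry_nonneg hnn _ p q) hDD i
      calc b ^ (m + 1) = b ^ m * b := by ring
        _ ≤ (Δ ^ (2 * m)) i i * (Δ * Δ) i i := by
            exact mul_le_mul_of_nonneg_right ih hb0 |>.trans
              (mul_le_mul_of_nonneg_left le_rfl (pow_entry_nonneg hnn _ i i))
        _ ≤ _ := h1
  have hodd : ∀ m : ℕ, Δ i i * b ^ m ≤ (Δ ^ (2 * m + 1)) i i := by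
    intro m
    have h1 : (Δ ^ (2 * m)) i i * Δ i i ≤ (Δ ^ (2 * m + 1)) i i := by
      rw [pow_succ]
      exact diag_mul_le (fun p q => pow_entry_nonneg hnn _ p q) hnn i
    calc Δ i i * b ^ m = b ^ m * Δ i i := by ring
      _ ≤ (Δ ^ (2 * m)) i i * Δ i i :=
          mul_le_mul_of_nonneg_right (heven m) (hnn i i)
      _ ≤ _ := h1
  -- summability of even/odd subsequences
  have hse : Summable fun m => (Δ ^ (2 * m)) i i :=
    (hsum i i).comp_injective (fun a b h => by omega)
  have hso : Summable fun m => (Δ ^ (2 * m + 1)) i i :=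
    (hsum i i).comp_injective (fun a b h => by omega)
  -- b < 1
  have hb1 : b < 1 := by
    have hgeo : Summable fun m => b ^ m :=
      Summable.of_nonneg_of_le (fun m => pow_nonneg hb0 m) heven hse
    have := summable_geometric_iff_norm_lt_one.mp hgeo
    calc b ≤ |b| := le_abs_self b
      _ < 1 := by simpa using this
  have hb1' : (0:ℝ) < 1 - b := by linarith
  have hgeo : Summable fun m => b ^ m := summable_geometric_of_lt_one hb0 hb1
  -- final computation
  have hsplit : ∑' m, (Δ ^ (2 * m)) i i + ∑' m, (Δ ^ (2 * m + 1)) i i = S i i := by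
    rw [hSapp]
    exact tsum_even_add_odd (f := fun k => (Δ ^ k) i i) hse hso
  have h2 : ∑' m, b ^ m ≤ ∑' m, (Δ ^ (2 * m)) i i := Summable.tsum_le_tsum heven hgeo hse
  have h3 : ∑' m, Δ i i * b ^ m ≤ ∑' m, (Δ ^ (2 * m + 1)) i i :=
    Summable.tsum_le_tsum hodd (hgeo.mul_left _) hso
  have h4 : (1 + Δ i i) / (1 - b) = ∑' m, b ^ m + ∑' m, Δ i i * b ^ m := by
    rw [tsum_mul_left, tsum_geometric_of_lt_one hb0 hb1]
    field_simp
  calc (1 + Δ i i) / (1 - b) = ∑' m, b ^ m + ∑' m, Δ i i * b ^ m := h4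
    _ ≤ ∑' m, (Δ ^ (2 * m)) i i + ∑' m, (Δ ^ (2 * m + 1)) i i := add_le_add h2 h3
    _ = S i i := hsplit
end

section
/- Let Δ ∈ ℝ^{n×n} be nonnegative with ρ(Δ) < 1 and Δ_ii < 1 for all i. Set d_i := ((I−Δ)^{-1})_{ii}. Then α_i := (1−Δ_ii) − 1/d_i ≥ 0 for every i. -/
open Filter Topology
open scoped ENNReal NNReal

private lemma nk_geom_left {R : Type*} [NormedRing R] [CompleteSpace R] (x : R)
    (hs : Summable (fun k : ℕ => x ^ k)) : (1 - x) * ∑' i : ℕ, x ^ i = 1 := by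
  have := hs.hasSum.mul_left (1 - x)
  refine tendsto_nhds_unique this.tendsto_sum_nat ?_
  have hx : Tendsto (fun k : ℕ => x ^ k) atTop (nhds 0) := hs.tendsto_atTop_zero
  have : Tendsto (fun n : ℕ ↦ 1 - x ^ n) atTop (nhds 1) := by
    simpa using tendsto_const_nhds.sub hx
  convert← this
  rw [← mul_neg_geom_sum, Finset.mul_sum]

private lemma nk_geom_right {R : Type*} [NormedRing R] [CompleteSpace R] (x : R)
    (hs : Summable (fun k : ℕ => x ^ k)) : (∑' i : ℕ, x ^ i) * (1 - x) = 1 := by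
  have := hs.hasSum.mul_right (1 - x)
  refine tendsto_nhds_unique this.tendsto_sum_nat ?_
  have hx : Tendsto (fun k : ℕ => x ^ k) atTop (nhds 0) := hs.tendsto_atTop_zero
  have : Tendsto (fun n : ℕ ↦ 1 - x ^ n) atTop (nhds 1) := by
    simpa using tendsto_const_nhds.sub hx
  convert← this
  rw [← geom_sum_mul_neg, Finset.sum_mul]

private lemma nk_summable_of_spectralRadius_lt_one {A : Type*} [NormedRing A] [NormedAlgebra ℂ A]
    [CompleteSpace A] (a : A) (h : spectralRadius ℂ a < 1) :
    Summable (fun k : ℕ => a ^ k) := by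
  obtain ⟨r, hr1, hr2⟩ := ENNReal.lt_iff_exists_nnreal_btwn.mp h
  have hr2' : (r : ℝ) < 1 := by exact_mod_cast hr2
  have hg := spectrum.pow_nnnorm_pow_one_div_tendsto_nhds_spectralRadius a
  have hev : ∀ᶠ k : ℕ in atTop, (‖a ^ k‖₊ : ℝ≥0∞) ^ (1 / (k:ℝ)) < (r : ℝ≥0∞) :=
    hg.eventually_lt_const hr1
  have hev2 : ∀ᶠ k : ℕ in atTop, ‖a ^ k‖ ≤ (r : ℝ) ^ k := by
    filter_upwards [hev, eventually_ge_atTop 1] with k hk hk1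
    have hkpos : (0:ℝ) < k := by positivity
    have h2 : ((‖a ^ k‖₊ : ℝ≥0∞) ^ (1 / (k:ℝ))) ^ (k:ℝ) ≤ (r : ℝ≥0∞) ^ (k:ℝ) :=
      ENNReal.rpow_le_rpow hk.le hkpos.le
    rw [← ENNReal.rpow_mul, one_div, inv_mul_cancel₀ hkpos.ne', ENNReal.rpow_one] at h2
    rw [ENNReal.rpow_natCast] at h2
    have h3 : ‖a ^ k‖₊ ≤ r ^ k := by exact_mod_cast h2
    calc ‖a ^ k‖ ≤ ((r ^ k : ℝ≥0) : ℝ) := h3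
      _ = (r : ℝ) ^ k := by push_cast; ring
  exact Summable.of_norm_bounded_eventually_nat
    (summable_geometric_of_lt_one r.coe_nonneg hr2') hev2

section Main

attribute [local instance] Matrix.linftyOpNormedRing Matrix.linftyOpNormedAlgebra

/-- The Ning–Kearfott parameter `α_i = (1-Δ_ii) - 1/d_i` is nonnegative,
where `d_i = ((I-Δ)⁻¹)_ii`. -/
theorem alpha_nonneg
    (n : ℕ) (Δ : Matrix (Fin n) (Fin n) ℝ)
    (hnn : ∀ i j, 0 ≤ Δ i j)
    (hρ : ∀ μ ∈ spectrum ℂ (Δ.map Complex.ofReal), ‖μ‖ < 1)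
    (hdiag : ∀ i, Δ i i < 1) :
    ∀ i, 0 ≤ (1 - Δ i i) - 1 / ((1 - Δ)⁻¹ i i) := by
  rcases Nat.eq_zero_or_pos n with rfl | hn
  · exact fun i => absurd i.isLt (by omega)
  have : NeZero n := ⟨hn.ne'⟩
  set a : Matrix (Fin n) (Fin n) ℂ := Δ.map Complex.ofReal with ha
  -- spectral radius < 1
  have hsr : spectralRadius ℂ a < 1 := by
    have : spectralRadius ℂ a < ((1 : ℝ≥0) : ℝ≥0∞) := by
      refine spectrum.spectralRadius_lt_of_forall_lt a (fun z hz => ?_)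
      have := hρ z hz
      rw [← coe_nnnorm] at this
      exact_mod_cast this
    simpa using this
  have hsum : Summable (fun k : ℕ => a ^ k) := nk_summable_of_spectralRadius_lt_one a hsr
  set S : Matrix (Fin n) (Fin n) ℂ := ∑' k : ℕ, a ^ k with hS
  have hleft : (1 - a) * S = 1 := nk_geom_left a hsum
  have hright : S * (1 - a) = 1 := nk_geom_right a hsum
  -- a = (1-Δ).map via ring hom
  have hmap : ∀ (M : Matrix (Fin n) (Fin n) ℝ), M.map Complex.ofReal
      = (Complex.ofRealHom.mapMatrix : Matrix (Fin n) (Fin n) ℝ →+* _) M := fun _ => rfl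
  have hone : (1 : Matrix (Fin n) (Fin n) ℝ).map Complex.ofReal = 1 := by
    rw [hmap]; exact map_one _
  have hsub : (1 - Δ).map Complex.ofReal = 1 - a := by
    rw [hmap, map_sub, ← hmap, ← hmap, hone, ha]
  -- determinant of 1 - Δ over ℝ is a unit
  have hU : IsUnit (1 - a) := ⟨⟨1 - a, S, hleft, hright⟩, rfl⟩
  have hdetC : IsUnit (1 - a).det := (Matrix.isUnit_iff_isUnit_det _).mp hU
  have hdetR : IsUnit (1 - Δ).det := by
    rw [← isUnit_map_iff Complex.ofRealHom]
    rwa [RingHom.map_det, ← hmap, hsub]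
  set B : Matrix (Fin n) (Fin n) ℝ := (1 - Δ)⁻¹ with hB
  have hBmul : B * (1 - Δ) = 1 := Matrix.nonsing_inv_mul _ hdetR
  -- B maps to S
  have hBmap : B.map Complex.ofReal = S := by
    have h1 : (B.map Complex.ofReal) * (1 - a) = 1 := by
      rw [← hsub, hmap, hmap, ← map_mul, ← hmap, hBmul, hone]
    calc B.map Complex.ofReal = (B.map Complex.ofReal) * ((1 - a) * S) := by
          rw [hleft, mul_one]
      _ = ((B.map Complex.ofReal) * (1 - a)) * S := by rw [mul_assoc]
      _ = S := by rw [h1, one_mul]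
  -- entries of powers over ℝ are nonneg
  have hpow : ∀ (k : ℕ) (i j : Fin n), 0 ≤ (Δ ^ k) i j := by
    intro k
    induction k with
    | zero => intro i j; by_cases h : i = j <;> simp [Matrix.one_apply, h]
    | succ m ih =>
      intro i j
      rw [pow_succ, Matrix.mul_apply]
      exact Finset.sum_nonneg fun l _ => mul_nonneg (ih i l) (hnn l j)
  -- entries of B are nonneg
  have hBnn : ∀ i j, 0 ≤ B i j := by
    intro i j
    have hentry : (B i j : ℂ) = S i j := by
      have := congrFun (congrFun hBmap i) j
      simpa [Matrix.map_apply] using this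
    -- entry extraction as CLM
    let E : Matrix (Fin n) (Fin n) ℂ →L[ℂ] ℂ :=
      LinearMap.toContinuousLinearMap (Matrix.entryLinearMap ℂ ℂ i j)
    have hSij : S i j = ∑' k : ℕ, (a ^ k) i j := by
      have := E.map_tsum hsum
      exact this
    have hak : ∀ k : ℕ, (a ^ k) i j = ((Δ ^ k) i j : ℂ) := by
      intro k
      have : a ^ k = (Δ ^ k).map Complex.ofReal := by
        rw [hmap, ha, hmap, map_pow]
      rw [this, Matrix.map_apply]
    have : (B i j : ℂ) = ((∑' k : ℕ, (Δ ^ k) i j : ℝ) : ℂ) := by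
      rw [hentry, hSij]
      rw [Complex.ofReal_tsum]
      exact tsum_congr fun k => hak k
    have hBeq : B i j = ∑' k : ℕ, (Δ ^ k) i j := by exact_mod_cast this
    rw [hBeq]
    exact tsum_nonneg fun k => hpow k i j
  -- main inequality
  intro i
  have hsum1 : ∑ k, B i k * (1 - Δ) k i = 1 := by
    have := congrFun (congrFun hBmul i) i
    simpa [Matrix.mul_apply, Matrix.one_apply] using this
  have hkey : 1 ≤ B i i * (1 - Δ i i) := by
    have hsplit : ∑ k, B i k * (1 - Δ) k i
        = B i i * (1 - Δ) i i + ∑ k ∈ Finset.univ.erase i, B i k * (1 - Δ) k i :=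
      (Finset.add_sum_erase _ _ (Finset.mem_univ i)).symm
    have hdi : (1 - Δ) i i = 1 - Δ i i := by simp [Matrix.sub_apply, Matrix.one_apply]
    have hrest : ∑ k ∈ Finset.univ.erase i, B i k * (1 - Δ) k i ≤ 0 := by
      refine Finset.sum_nonpos fun k hk => ?_
      have hki : k ≠ i := Finset.ne_of_mem_erase hk
      have : (1 - Δ) k i = -Δ k i := by simp [Matrix.sub_apply, Matrix.one_apply, hki]
      rw [this, mul_neg, neg_nonpos]
      exact mul_nonneg (hBnn i k) (hnn k i)
    calc (1:ℝ) = ∑ k, B i k * (1 - Δ) k i := hsum1.symm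
      _ = B i i * (1 - Δ) i i + ∑ k ∈ Finset.univ.erase i, B i k * (1 - Δ) k i := hsplit
      _ ≤ B i i * (1 - Δ) i i := by linarith
      _ = B i i * (1 - Δ i i) := by rw [hdi]
  have h1 : (0:ℝ) < 1 - Δ i i := by linarith [hdiag i]
  have hb : (0:ℝ) < B i i := by nlinarith
  have : 1 / B i i ≤ 1 - Δ i i := by
    rw [div_le_iff₀ hb]; nlinarith
  linarith

end Main
end

section
/- Let A be an n×n interval matrix with mid(A) = I_n and ρ(rad(A)) < 1, and b an interval vector. Then the solution set Σ := {x : ∃A∈A, ∃b∈b, Ax = b} is bounded, and its magnitude satisfies mag(Σ)_i ≤ u_i for all i, where u := ⟨A⟩^{-1} mag(b) = (I − rad(A))^{-1} mag(b). -/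
open Filter Topology

attribute [local instance] Matrix.linftyOpNormedAddCommGroup Matrix.linftyOpNormedRing
  Matrix.linftyOpNormedAlgebra

lemma aux_mulVec_mono {n : ℕ} {M : Matrix (Fin n) (Fin n) ℝ} (hM : ∀ i j, 0 ≤ M i j)
    {v w : Fin n → ℝ} (hvw : ∀ j, v j ≤ w j) (i : Fin n) :
    M.mulVec v i ≤ M.mulVec w i := by
  simp only [Matrix.mulVec, dotProduct]
  exact Finset.sum_le_sum fun j _ => mul_le_mul_of_nonneg_left (hvw j) (hM i j)

lemma aux_pow_nonneg {n : ℕ} {M : Matrix (Fin n) (Fin n) ℝ} (hM : ∀ i j, 0 ≤ M i j) :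
    ∀ k, ∀ i j, 0 ≤ (M ^ k) i j := by
  intro k
  induction k with
  | zero =>
    intro i j
    rw [pow_zero]
    by_cases h : i = j <;> simp [Matrix.one_apply, h]
  | succ k ih =>
    intro i j
    rw [pow_succ, Matrix.mul_apply]
    exact Finset.sum_nonneg fun l _ => mul_nonneg (ih i l) (hM l j)

lemma aux_pow_decay {n : ℕ} (Δ : Matrix (Fin n) (Fin n) ℝ)
    (hρ : ∀ μ ∈ spectrum ℂ (Δ.map Complex.ofReal), ‖μ‖ < 1) :
    ∃ r : NNReal, (r:ℝ) < 1 ∧ ∀ᶠ k : ℕ in atTop, ‖(Δ.map Complex.ofReal) ^ k‖ ≤ (r:ℝ)^k := by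
  set Δc := Δ.map Complex.ofReal with hΔc
  haveI : CompleteSpace (Matrix (Fin n) (Fin n) ℂ) := FiniteDimensional.complete ℂ _
  have hsr : spectralRadius ℂ Δc < 1 := by
    by_cases hs : (spectrum ℂ Δc).Nonempty
    · obtain ⟨μ₀, hμ₀, hmax⟩ := (spectrum.isCompact Δc).exists_isMaxOn hs
        continuous_norm.continuousOn
      have h1 : spectralRadius ℂ Δc ≤ (‖μ₀‖₊ : ENNReal) :=
        iSup₂_le fun μ hμ => by exact_mod_cast ENNReal.coe_le_coe.mpr (hmax hμ)
      refine h1.trans_lt ?_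
      rw [← ENNReal.coe_one, ENNReal.coe_lt_coe]
      exact_mod_cast hρ μ₀ hμ₀
    · rw [Set.not_nonempty_iff_eq_empty] at hs
      unfold spectralRadius
      simp [hs]
  obtain ⟨r, hr1, hr2⟩ := ENNReal.lt_iff_exists_nnreal_btwn.mp hsr
  have hr2' : (r : ℝ) < 1 := by exact_mod_cast ENNReal.coe_lt_one_iff.mp hr2
  refine ⟨r, hr2', ?_⟩
  have h := (spectrum.pow_nnnorm_pow_one_div_tendsto_nhds_spectralRadius Δc).eventually_lt_const hr1
  filter_upwards [h, Filter.eventually_ge_atTop 1] with k hk hk1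
  have hkne : (k:ℝ) ≠ 0 := by positivity
  have h2 := ENNReal.rpow_lt_rpow hk (by positivity : (0:ℝ) < (k:ℝ))
  rw [← ENNReal.rpow_mul, one_div, inv_mul_cancel₀ hkne, ENNReal.rpow_one,
    ENNReal.rpow_natCast, ← ENNReal.coe_pow, ENNReal.coe_lt_coe] at h2
  have h3 : ‖Δc ^ k‖ ≤ ((r ^ k : NNReal) : ℝ) := le_of_lt h2
  simpa using h3

/-- entry bound for the linfty operator norm -/
lemma aux_entry_le {n : ℕ} (M : Matrix (Fin n) (Fin n) ℂ) (i j : Fin n) :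
    ‖M i j‖ ≤ ‖M‖ := by
  have h : ‖M i j‖₊ ≤ ‖M‖₊ := by
    rw [Matrix.linfty_opNNNorm_def]
    exact (Finset.single_le_sum (f := fun j => ‖M i j‖₊) (fun _ _ => zero_le)
      (Finset.mem_univ j)).trans (Finset.le_sup (f := fun i => ∑ j, ‖M i j‖₊) (Finset.mem_univ i))
  exact_mod_cast h

/-- For an interval system with `mid(A) = I` and `ρ(rad A) < 1`, the
solution set is bounded and its magnitude is bounded by `u = (I - rad A)⁻¹ mag(b)`. -/
theorem solution_set_bounded_and_magnitude
    (n : ℕ) (Alo Ahi Δ : Matrix (Fin n) (Fin n) ℝ) (blo bhi : Fin n → ℝ)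
    (hAlo : ∀ i j, Alo i j ≤ Ahi i j) (hblo : ∀ i, blo i ≤ bhi i)
    (hmid : (2 : ℝ)⁻¹ • (Alo + Ahi) = 1)
    (hrad : Δ = (2 : ℝ)⁻¹ • (Ahi - Alo))
    (hρ : ∀ μ ∈ spectrum ℂ (Δ.map Complex.ofReal), ‖μ‖ < 1)
    (sol : Set (Fin n → ℝ))
    (hsol : sol = {x | ∃ A : Matrix (Fin n) (Fin n) ℝ, ∃ b : Fin n → ℝ,
      (∀ i j, A i j ∈ Set.Icc (Alo i j) (Ahi i j)) ∧
      (∀ i, b i ∈ Set.Icc (blo i) (bhi i)) ∧ A.mulVec x = b})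
    (u : Fin n → ℝ)
    (hu : u = (1 - Δ)⁻¹.mulVec (fun i => max |blo i| |bhi i|)) :
    Bornology.IsBounded sol ∧ ∀ x ∈ sol, ∀ i, |x i| ≤ u i := by
  set c : Fin n → ℝ := fun i => max |blo i| |bhi i| with hc
  -- entrywise facts
  have hΔe : ∀ i j, Δ i j = 2⁻¹ * (Ahi i j - Alo i j) := by
    intro i j; rw [hrad]; simp [Matrix.sub_apply]
  have h1e : ∀ i j, (1 : Matrix (Fin n) (Fin n) ℝ) i j = 2⁻¹ * (Alo i j + Ahi i j) := by
    intro i j; rw [← hmid]; simp [Matrix.add_apply]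
  have hΔ0 : ∀ i j, 0 ≤ Δ i j := by
    intro i j; rw [hΔe]; have := hAlo i j; linarith
  -- invertibility of 1 - Δ
  set Δc := Δ.map Complex.ofReal with hΔc
  have hmapsub : (1 - Δ).map Complex.ofReal = 1 - Δc := by
    ext i j
    by_cases h : i = j <;>
      simp [hΔc, Matrix.map_apply, Matrix.sub_apply, Matrix.one_apply, h]
  have hdet : IsUnit (1 - Δ).det := by
    rw [isUnit_iff_ne_zero]
    intro h0
    have h1 : (1 - Δc).det = 0 := by
      have h := RingHom.map_det Complex.ofRealHom (1 - Δ)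
      rw [RingHom.mapMatrix_apply] at h
      have h2 : ((1 - Δ).map Complex.ofReal).det = Complex.ofRealHom (1 - Δ).det := h.symm
      rw [← hmapsub, h2, h0]
      simp
    have hnu : ¬ IsUnit (1 - Δc) := by
      rw [Matrix.isUnit_iff_isUnit_det, h1]
      simp
    have h1s : (1 : ℂ) ∈ spectrum ℂ Δc := by
      rw [spectrum.mem_iff]
      simpa using hnu
    have := hρ 1 h1s
    simp at this
  have hcu : (1 - Δ).mulVec u = c := by
    rw [hu, Matrix.mulVec_mulVec, Matrix.mul_nonsing_inv _ hdet, Matrix.one_mulVec]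
  have hcu' : ∀ i, u i - Δ.mulVec u i = c i := by
    intro i
    have := congrFun hcu i
    simp only [Matrix.sub_mulVec, Matrix.one_mulVec, Pi.sub_apply] at this
    exact this
  -- power decay
  obtain ⟨r, hr1, hrev⟩ := aux_pow_decay Δ hρ
  have hmappow : ∀ k : ℕ, Δc ^ k = (Δ ^ k).map Complex.ofReal := by
    intro k
    have : Δc = Complex.ofRealHom.mapMatrix Δ := rfl
    rw [this, ← map_pow]
    rfl
  -- the key componentwise bound
  have key : ∀ x ∈ sol, ∀ i, |x i| ≤ u i := by
    intro x hx
    rw [hsol] at hx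
    obtain ⟨A, b, hA, hb, hAx⟩ := hx
    set y : Fin n → ℝ := fun i => |x i| with hy
    have hyc : ∀ i, y i - Δ.mulVec y i ≤ c i := by
      intro i
      have hbi : ∑ j, A i j * x j = b i := congrFun hAx i
      have hxe : x i = b i - ∑ j, (A i j - (1 : Matrix (Fin n) (Fin n) ℝ) i j) * x j := by
        have hone : ∑ j, (1 : Matrix (Fin n) (Fin n) ℝ) i j * x j = x i := by
          simp [Matrix.one_apply]
        rw [Finset.sum_congr rfl (fun j _ => sub_mul (A i j) _ (x j)),
          Finset.sum_sub_distrib, hbi, hone]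
        ring
      have hS : |∑ j, (A i j - (1 : Matrix (Fin n) (Fin n) ℝ) i j) * x j| ≤ Δ.mulVec y i := by
        refine (Finset.abs_sum_le_sum_abs _ _).trans ?_
        simp only [Matrix.mulVec, dotProduct]
        refine Finset.sum_le_sum fun j _ => ?_
        rw [abs_mul]
        refine mul_le_mul_of_nonneg_right ?_ (abs_nonneg _)
        obtain ⟨hA1, hA2⟩ := hA i j
        rw [abs_le, h1e, hΔe]
        constructor <;> linarith
      have hbc : |b i| ≤ c i := abs_le_max_abs_abs (hb i).1 (hb i).2
      have : |x i| ≤ |b i| + |∑ j, (A i j - (1 : Matrix (Fin n) (Fin n) ℝ) i j) * x j| := by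
        rw [hxe]; exact abs_sub _ _
      simp only [hy]
      linarith [this, hS, hbc]
    set z : Fin n → ℝ := fun i => u i - y i with hz
    have hzstep : ∀ i, Δ.mulVec z i ≤ z i := by
      intro i
      have hlin : Δ.mulVec z i = Δ.mulVec u i - Δ.mulVec y i := by
        simp only [Matrix.mulVec, dotProduct, hz]
        rw [← Finset.sum_sub_distrib]
        exact Finset.sum_congr rfl fun j _ => by ring
      have := hcu' i
      have := hyc i
      rw [hlin]
      simp only [hz]
      linarith
    have hkstep : ∀ k, ∀ i, (Δ ^ k).mulVec z i ≤ z i := by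
      intro k
      induction k with
      | zero => intro i; simp [Matrix.one_mulVec]
      | succ k ih =>
        intro i
        have h1 : (Δ ^ (k+1)).mulVec z = (Δ ^ k).mulVec (Δ.mulVec z) := by
          rw [Matrix.mulVec_mulVec, ← pow_succ]
        rw [h1]
        exact (aux_mulVec_mono (aux_pow_nonneg hΔ0 k) hzstep i).trans (ih i)
    have hlim : ∀ i, Tendsto (fun k => (Δ ^ k).mulVec z i) atTop (𝓝 0) := by
      intro i
      have hgl : Tendsto (fun k : ℕ => (r:ℝ)^k * ∑ j, |z j|) atTop (𝓝 0) := by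
        have h0 : Tendsto (fun k : ℕ => (r:ℝ)^k) atTop (𝓝 0) :=
          tendsto_pow_atTop_nhds_zero_of_lt_one r.coe_nonneg hr1
        simpa using h0.mul_const (∑ j, |z j|)
      refine squeeze_zero_norm' ?_ hgl
      · filter_upwards [hrev] with k hk
        simp only [Matrix.mulVec, dotProduct, Real.norm_eq_abs]
        refine (Finset.abs_sum_le_sum_abs _ _).trans ?_
        rw [Finset.mul_sum]
        refine Finset.sum_le_sum fun j _ => ?_
        rw [abs_mul]
        refine mul_le_mul_of_nonneg_right ?_ (abs_nonneg _)
        have he : (Δc ^ k) i j = Complex.ofReal ((Δ ^ k) i j) := by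
          rw [hmappow]; rfl
        have h := aux_entry_le (Δc ^ k) i j
        rw [he, Complex.norm_real, Real.norm_eq_abs] at h
        exact h.trans hk
    intro i
    have h0z : 0 ≤ z i :=
      le_of_tendsto (hlim i) (Filter.Eventually.of_forall fun k => hkstep k i)
    simp only [hz, hy] at h0z ⊢
    linarith
  refine ⟨?_, key⟩
  apply (Metric.isBounded_closedBall (x := (0 : Fin n → ℝ)) (r := ‖u‖)).subset
  intro x hx
  rw [Metric.mem_closedBall, dist_zero_right]
  refine (pi_norm_le_iff_of_nonneg (norm_nonneg u)).mpr fun i => ?_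
  rw [Real.norm_eq_abs]
  exact (key x hx i).trans ((le_abs_self _).trans ((norm_le_pi_norm u i).trans_eq (by simp)))
end
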